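/- For the (δ_s, G)-ICSIE over F_q: the family Φ = { B ⊆ [n] nonempty : |X_i ∩ B| ≥ 2δ_s+1 for all i with f(i) ∈ B } is empty if and only if the optimal codelength N_opt^q(δ_s, G) equals n. -/

import Mathlib

/-- `Φ = ∅` iff the optimal codelength of the `(δs, G)`-ICSIE
equals `n`. -/
theorem stmt7 {F : Type} [Field F] [DecidableEq F]
    {n m : ℕ} (δs : ℕ)
    (X : Fin m → Finset (Fin n)) (f : Fin m → Fin n)
    (hf : ∀ i, f i ∉ X i) :
    (∀ B : Finset (Fin n), B.Nonempty →
      ∃ i : Fin m, f i ∈ B ∧ ((X i) ∩ B).card < 2 * δs + 1) ↔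
    sInf {N : ℕ | ∃ G : Matrix (Fin n) (Fin N) F,
        ∀ z : Fin n → F,
          (∃ i : Fin m, z (f i) ≠ 0 ∧
            ((X i).filter (fun j => z j ≠ 0)).card ≤ 2 * δs) →
          Matrix.vecMul z G ≠ 0} = n := by
  classical
  set S : Set ℕ := {N : ℕ | ∃ G : Matrix (Fin n) (Fin N) F,
        ∀ z : Fin n → F,
          (∃ i : Fin m, z (f i) ≠ 0 ∧
            ((X i).filter (fun j => z j ≠ 0)).card ≤ 2 * δs) →
          Matrix.vecMul z G ≠ 0} with hSdef
  have hnS : n ∈ S := by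
    refine ⟨1, ?_⟩
    rintro z ⟨i, hz, -⟩ hzero
    rw [Matrix.vecMul_one] at hzero
    exact hz (congrFun hzero (f i))
  constructor
  · intro hΦ
    refine le_antisymm (csInf_le (OrderBot.bddBelow _) hnS) (le_csInf ⟨n, hnS⟩ ?_)
    rintro N ⟨G, hG⟩
    by_contra hlt
    push_neg at hlt
    have hninj : ¬ Function.Injective (Matrix.vecMulLinear G) := by
      intro hinj
      have h1 := LinearMap.finrank_le_finrank_of_injective hinj
      simp [Module.finrank_fin_fun] at h1
      omega
    rw [Function.not_injective_iff] at hninj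
    obtain ⟨x, y, hxy, hne⟩ := hninj
    set z : Fin n → F := x - y with hz
    have hzG : Matrix.vecMul z G = 0 := by
      have : Matrix.vecMulLinear G (x - y) = 0 := by
        rw [map_sub, hxy, sub_self]
      rw [hz]; simpa [Matrix.vecMulLinear_apply, Matrix.sub_vecMul] using this
    have hzne : z ≠ 0 := sub_ne_zero_of_ne hne
    set B : Finset (Fin n) := Finset.univ.filter (fun j => z j ≠ 0) with hB
    have hBne : B.Nonempty := by
      obtain ⟨j, hj⟩ := Function.ne_iff.mp hzne
      exact ⟨j, Finset.mem_filter.mpr ⟨Finset.mem_univ j, by simpa using hj⟩⟩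
    obtain ⟨i, hfi, hcard⟩ := hΦ B hBne
    have hfz : z (f i) ≠ 0 := by
      have := Finset.mem_filter.mp hfi
      exact this.2
    have heq : (X i).filter (fun j => z j ≠ 0) = X i ∩ B := by
      ext j
      simp [hB, Finset.mem_filter]
    exact hG z ⟨i, hfz, by rw [heq]; omega⟩ hzG
  · intro hinf
    by_contra hΦ
    push_neg at hΦ
    obtain ⟨B, hBne, hB⟩ := hΦ
    obtain ⟨b, hb⟩ := hBne
    obtain ⟨k, rfl⟩ : ∃ k, n = k + 1 := ⟨n - 1, by have := b.pos; omega⟩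
    have hkS : k ∈ S := by
      refine ⟨fun j l => (if j = b.succAbove l then (1:F) else 0)
          - (if b.succAbove l ∈ B then (if j = b then (1:F) else 0) else 0), ?_⟩
      rintro z ⟨i, hzf, hzcard⟩ hzero
      have hval : ∀ l : Fin k,
          z (b.succAbove l) = if b.succAbove l ∈ B then z b else 0 := by
        intro l
        have h := congrFun hzero l
        simp only [Matrix.vecMul, dotProduct, mul_sub, mul_ite, mul_one, mul_zero,
          Finset.sum_sub_distrib, Finset.sum_ite_eq', Finset.mem_univ, if_true,
          Pi.zero_apply] at h
        rw [sub_eq_zero] at h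
        simpa using h
      have hz : ∀ j : Fin (k+1), z j = if j ∈ B then z b else 0 := by
        intro j
        rcases eq_or_ne j b with rfl | hj
        · simp [hb]
        · obtain ⟨l, rfl⟩ := Fin.exists_succAbove_eq hj
          exact hval l
      rcases eq_or_ne (z b) 0 with hzb | hzb
      · apply hzf
        rw [hz (f i), hzb]
        simp
      · have hfiB : f i ∈ B := by
          by_contra hfiB
          apply hzf
          rw [hz (f i), if_neg hfiB]
        have heq : (X i).filter (fun j => z j ≠ 0) = X i ∩ B := by
          ext j
          simp only [Finset.mem_filter, Finset.mem_inter]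
          constructor
          · rintro ⟨hj, hjz⟩
            refine ⟨hj, ?_⟩
            by_contra hjB
            exact hjz (by rw [hz j, if_neg hjB])
          · rintro ⟨hj, hjB⟩
            refine ⟨hj, ?_⟩
            rw [hz j, if_pos hjB]
            exact hzb
        have := hB i hfiB
        rw [heq] at hzcard
        omega
    have hle : sInf S ≤ k := csInf_le (OrderBot.bddBelow _) hkS
    omega
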